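/- Let α ∈ ℂ with 0 < |α| < 1, let ε₀ > 0 and C ≥ 0, and let A, B : ℂ → ℂ satisfy |A(z)| ≤ C|z| and |B(z)| ≤ C|z| for all z with |z| < ε₀. Define φ(z₁,z₂) = (α z₁, z₂ + 1 + A(z₁) + B(z₁) z₂) and let aₙ(z₁) = (φ⁽ⁿ⁾(z₁,0))₂ − n, bₙ(z₁) = (φ⁽ⁿ⁾(z₁,1))₂ − (φ⁽ⁿ⁾(z₁,0))₂ − 1, where φ⁽ⁿ⁾ is the n-th iterate and (·)₂ the second coordinate. Then there exist ε ∈ (0, ε₀] and a constant C' < ∞ such that for every n ≥ 1, every z₁ with |z₁| < ε and every z₂ ∈ ℂ one has φ⁽ⁿ⁾(z₁,z₂) = (αⁿ z₁, z₂ + n + aₙ(z₁) + bₙ(z₁) z₂), with |aₙ(z₁)| ≤ C'|z₁|/(1−|α|)² and |bₙ(z₁)| ≤ C'|z₁|/(1−|α|). -/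

import Mathlib

set_option maxHeartbeats 2000000 in
/-- Normal-form part of Lemma `action-lem`: the `n`-th iterate of
`φ(z₁,z₂) = (α z₁, z₂ + 1 + A(z₁) + B(z₁) z₂)` has the affine normal form
`φ⁽ⁿ⁾(z₁,z₂) = (αⁿ z₁, z₂ + n + aₙ(z₁) + bₙ(z₁) z₂)` with the stated estimates. -/
theorem stmt_0 (α : ℂ) (hα0 : 0 < ‖α‖) (hα1 : ‖α‖ < 1)
    (ε₀ : ℝ) (hε₀ : 0 < ε₀) (C : ℝ) (hC : 0 ≤ C)
    (A B : ℂ → ℂ)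
    (hA : ∀ z : ℂ, ‖z‖ < ε₀ → ‖A z‖ ≤ C * ‖z‖)
    (hB : ∀ z : ℂ, ‖z‖ < ε₀ → ‖B z‖ ≤ C * ‖z‖)
    (φ : ℂ × ℂ → ℂ × ℂ)
    (hφ : ∀ z₁ z₂ : ℂ, φ (z₁, z₂) = (α * z₁, z₂ + 1 + A z₁ + B z₁ * z₂))
    (a b : ℕ → ℂ → ℂ)
    (ha : ∀ (n : ℕ) (z₁ : ℂ), a n z₁ = (φ^[n] (z₁, 0)).2 - (n : ℂ))
    (hb : ∀ (n : ℕ) (z₁ : ℂ),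
      b n z₁ = (φ^[n] (z₁, 1)).2 - (φ^[n] (z₁, 0)).2 - 1) :
    ∃ ε : ℝ, 0 < ε ∧ ε ≤ ε₀ ∧ ∃ C' : ℝ,
      ∀ n : ℕ, 1 ≤ n → ∀ z₁ : ℂ, ‖z₁‖ < ε → ∀ z₂ : ℂ,
        φ^[n] (z₁, z₂) = (α ^ n * z₁, z₂ + (n : ℂ) + a n z₁ + b n z₁ * z₂) ∧
        ‖a n z₁‖ ≤ C' * ‖z₁‖ / (1 - ‖α‖) ^ 2 ∧
        ‖b n z₁‖ ≤ C' * ‖z₁‖ / (1 - ‖α‖) := by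
  set r := ‖α‖ with hrdef
  have hr1 : r < 1 := hα1
  have hr0 : 0 ≤ r := le_of_lt hα0
  set δ := 1 - r with hδdef
  have hδ : 0 < δ := by simp only [hδdef]; linarith
  have hδ1 : δ ≤ 1 := by simp only [hδdef]; linarith
  set ε := min ε₀ (δ ^ 2 / (3 * C + 2)) with hεdef
  have hε0 : 0 < ε := lt_min hε₀ (by positivity)
  have hεε₀ : ε ≤ ε₀ := min_le_left _ _
  have hεs : ε * (3 * C + 2) ≤ δ ^ 2 := by
    have h := min_le_right ε₀ (δ ^ 2 / (3 * C + 2))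
    rw [← hεdef] at h
    rw [← le_div_iff₀ (by positivity)]
    exact h
  -- geometric sum bounds
  have hGnn : ∀ m : ℕ, (0:ℝ) ≤ ∑ k ∈ Finset.range m, r ^ k :=
    fun m => Finset.sum_nonneg fun k _ => pow_nonneg hr0 k
  have hSnn : ∀ m : ℕ, (0:ℝ) ≤ ∑ k ∈ Finset.range m, (2 + (k:ℝ)) * r ^ k :=
    fun m => Finset.sum_nonneg fun k _ => by positivity
  have hG : ∀ m : ℕ, ∑ k ∈ Finset.range m, r ^ k ≤ 1 / δ := by
    intro m
    have h1 : ∑ k ∈ Finset.range m, r ^ k ≤ ∑' k : ℕ, r ^ k :=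
      Summable.sum_le_tsum _ (fun k _ => pow_nonneg hr0 k) (summable_geometric_of_lt_one hr0 hr1)
    rw [tsum_geometric_of_lt_one hr0 hr1] at h1
    rw [one_div]
    exact h1
  have hK : ∀ m : ℕ, ∑ k ∈ Finset.range m, (k:ℝ) * r ^ k ≤ 1 / δ ^ 2 := by
    intro m
    have hnorm : ‖r‖ < 1 := by rwa [Real.norm_eq_abs, abs_of_nonneg hr0]
    have hsum := hasSum_coe_mul_geometric_of_norm_lt_one (𝕜 := ℝ) hnorm
    have h1 : ∑ k ∈ Finset.range m, (k:ℝ) * r ^ k ≤ ∑' k : ℕ, (k:ℝ) * r ^ k :=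
      Summable.sum_le_tsum _ (fun k _ => by positivity) hsum.summable
    rw [hsum.tsum_eq] at h1
    have h2 : r / (1 - r) ^ 2 ≤ 1 / δ ^ 2 := by
      rw [← hδdef, div_le_div_iff₀ (by positivity) (by positivity)]
      nlinarith
    exact h1.trans h2
  have hS : ∀ m : ℕ, ∑ k ∈ Finset.range m, (2 + (k:ℝ)) * r ^ k ≤ 3 / δ ^ 2 := by
    intro m
    have h1 : ∑ k ∈ Finset.range m, (2 + (k:ℝ)) * r ^ k
        = 2 * ∑ k ∈ Finset.range m, r ^ k + ∑ k ∈ Finset.range m, (k:ℝ) * r ^ k := by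
      rw [Finset.mul_sum, ← Finset.sum_add_distrib]
      exact Finset.sum_congr rfl fun k _ => by ring
    have hδδ : 1 / δ ≤ 1 / δ ^ 2 := by
      apply one_div_le_one_div_of_le (by positivity)
      nlinarith
    have := hG m; have := hK m
    rw [h1, show (3:ℝ) / δ ^ 2 = 2 * (1 / δ ^ 2) + 1 / δ ^ 2 by ring]
    have h3 : 2 * ∑ k ∈ Finset.range m, r ^ k ≤ 2 * (1 / δ) := by linarith
    have h4 : 2 * (1 / δ) ≤ 2 * (1 / δ ^ 2) := by linarith
    linarith
  refine ⟨ε, hε0, hεε₀, 3 * C, ?_⟩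
  intro n _ z₁ hz₁ z₂
  have hz₁nn : 0 ≤ ‖z₁‖ := norm_nonneg z₁
  have hz₁ε : ‖z₁‖ ≤ ε := hz₁.le
  -- key smallness: C * |z₁| * (3/δ²) ≤ 1 and 2*C*|z₁|*(1/δ) ≤ 1
  have hsmallS : C * ‖z₁‖ * (3 / δ ^ 2) ≤ 1 := by
    rw [show C * ‖z₁‖ * (3 / δ ^ 2) = (3 * C * ‖z₁‖) / δ ^ 2 by ring,
      div_le_one (by positivity)]
    nlinarith
  have hsmallG : 2 * C * ‖z₁‖ * (1 / δ) ≤ 1 := by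
    rw [show 2 * C * ‖z₁‖ * (1 / δ) = (2 * C * ‖z₁‖) / δ by ring,
      div_le_one hδ]
    nlinarith
  have key : ∀ m : ℕ,
      (∀ w : ℂ, φ^[m] (z₁, w) = (α ^ m * z₁, w + (m : ℂ) + a m z₁ + b m z₁ * w)) ∧
      ‖a m z₁‖ ≤ C * ‖z₁‖ * ∑ k ∈ Finset.range m, (2 + (k:ℝ)) * r ^ k ∧
      ‖b m z₁‖ ≤ 2 * C * ‖z₁‖ * ∑ k ∈ Finset.range m, r ^ k := by
    intro m
    induction m with
    | zero =>
      have ha0 : a 0 z₁ = 0 := by simp [ha]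
      have hb0 : b 0 z₁ = 0 := by simp [hb]
      refine ⟨fun w => ?_, ?_, ?_⟩
      · simp [ha0, hb0]
      · simp [ha0]
      · simp [hb0]
    | succ m ih =>
      obtain ⟨ihf, iha, ihb⟩ := ih
      have habs : ‖α ^ m * z₁‖ = r ^ m * ‖z₁‖ := by
        rw [norm_mul, norm_pow]
      have hrm1 : r ^ m ≤ 1 := pow_le_one₀ hr0 hr1.le
      have hrmn : (0:ℝ) ≤ r ^ m := pow_nonneg hr0 m
      have hlt : ‖α ^ m * z₁‖ < ε₀ := by
        rw [habs]
        nlinarith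
      have hAm : ‖A (α ^ m * z₁)‖ ≤ C * (r ^ m * ‖z₁‖) := by
        have := hA _ hlt; rwa [habs] at this
      have hBm : ‖B (α ^ m * z₁)‖ ≤ C * (r ^ m * ‖z₁‖) := by
        have := hB _ hlt; rwa [habs] at this
      have ha1 : ‖a m z₁‖ ≤ 1 := by
        refine iha.trans (le_trans ?_ hsmallS)
        have := hS m
        have hCz : 0 ≤ C * ‖z₁‖ := by positivity
        nlinarith
      have hb1 : ‖b m z₁‖ ≤ 1 := by
        refine ihb.trans (le_trans ?_ hsmallG)
        have := hG m
        have hCz : 0 ≤ 2 * C * ‖z₁‖ := by positivity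
        nlinarith
      have haa : a (m + 1) z₁
          = a m z₁ + A (α ^ m * z₁) + B (α ^ m * z₁) * ((m : ℂ) + a m z₁) := by
        rw [ha, Function.iterate_succ_apply', ihf 0, hφ]
        push_cast
        ring
      have hbb : b (m + 1) z₁ = b m z₁ + B (α ^ m * z₁) * (1 + b m z₁) := by
        rw [hb, Function.iterate_succ_apply', Function.iterate_succ_apply',
          ihf 0, ihf 1, hφ, hφ]
        ring
      refine ⟨fun w => ?_, ?_, ?_⟩
      · rw [Function.iterate_succ_apply', ihf w, hφ, haa, hbb, Prod.mk.injEq]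
        constructor
        · ring
        · push_cast; ring
      · rw [haa, Finset.sum_range_succ]
        have e1 : ‖a m z₁ + A (α ^ m * z₁) + B (α ^ m * z₁) * ((m : ℂ) + a m z₁)‖
            ≤ ‖a m z₁‖ + ‖A (α ^ m * z₁)‖
              + ‖B (α ^ m * z₁)‖ * ((m : ℝ) + 1) := by
          refine le_trans (norm_add_le _ _) ?_
          have h2 : ‖B (α ^ m * z₁) * ((m : ℂ) + a m z₁)‖
              ≤ ‖B (α ^ m * z₁)‖ * ((m : ℝ) + 1) := by
            rw [norm_mul]
            refine mul_le_mul_of_nonneg_left ?_ (norm_nonneg _)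
            refine le_trans (norm_add_le _ _) ?_
            rw [Complex.norm_natCast]
            linarith
          have h3 := norm_add_le (a m z₁) (A (α ^ m * z₁))
          linarith
        refine e1.trans ?_
        have h4 : ‖B (α ^ m * z₁)‖ * ((m : ℝ) + 1)
            ≤ C * (r ^ m * ‖z₁‖) * ((m : ℝ) + 1) :=
          mul_le_mul_of_nonneg_right hBm (by positivity)
        have hm0 : (0:ℝ) ≤ (m:ℝ) := Nat.cast_nonneg m
        nlinarith
      · rw [hbb, Finset.sum_range_succ]
        have e1 : ‖b m z₁ + B (α ^ m * z₁) * (1 + b m z₁)‖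
            ≤ ‖b m z₁‖ + ‖B (α ^ m * z₁)‖ * 2 := by
          refine le_trans (norm_add_le _ _) ?_
          have h2 : ‖B (α ^ m * z₁) * (1 + b m z₁)‖
              ≤ ‖B (α ^ m * z₁)‖ * 2 := by
            rw [norm_mul]
            refine mul_le_mul_of_nonneg_left ?_ (norm_nonneg _)
            refine le_trans (norm_add_le _ _) ?_
            simp only [norm_one]
            linarith
          linarith
        refine e1.trans ?_
        nlinarith
  obtain ⟨kf, kA, kB⟩ := key n
  refine ⟨kf z₂, ?_, ?_⟩
  · refine kA.trans ?_
    have := hS n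
    have hCz : 0 ≤ C * ‖z₁‖ := by positivity
    rw [show 3 * C * ‖z₁‖ / δ ^ 2 = C * ‖z₁‖ * (3 / δ ^ 2) by ring]
    nlinarith
  · refine kB.trans ?_
    have := hG n
    have hCz : 0 ≤ 2 * C * ‖z₁‖ := by positivity
    have h2 : 2 * C * ‖z₁‖ * ∑ k ∈ Finset.range n, r ^ k
        ≤ 2 * C * ‖z₁‖ * (1 / δ) := by nlinarith
    refine h2.trans ?_
    rw [show 2 * C * ‖z₁‖ * (1 / δ) = 2 * C * ‖z₁‖ / δ by ring,
      div_le_div_iff₀ hδ hδ]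
    nlinarith
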